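/- (Theorem 17 of the paper) Let P₁ and P₂ be dense sets of infinite binary strings (dense subsets of the Cantor space 2^ω). Then for every ordinal α < ω², Player II has a winning strategy in the propositional game EFB^P_α(P₁,P₂); that is, WinI^P(P₁,P₂,α) fails for every α < ω². -/

import Mathlib

/-- Propositional `L_{ω₁ω}`-formulas over propositional symbols `p i`, `i : ℕ`,
in negation normal form. -/
inductive PFml : Type
  | pos : ℕ → PFml
  | neg : ℕ → PFml
  | and : PFml → PFml → PFml
  | or : PFml → PFml → PFml
  | iand : (ℕ → PFml) → PFml
  | ior : (ℕ → PFml) → PFml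

/-- Satisfaction of a propositional formula by an infinite binary string. -/
def PSat (t : ℕ → Bool) : PFml → Prop
  | .pos i => t i = true
  | .neg i => t i = false
  | .and φ ψ => PSat t φ ∧ PSat t ψ
  | .or φ ψ => PSat t φ ∨ PSat t ψ
  | .iand f => ∀ i : ℕ, PSat t (f i)
  | .ior f => ∃ i : ℕ, PSat t (f i)

namespace Ordinal

universe u

/-- Natural addition of ordinals (removed from Mathlib; restored with its old definition). -/
noncomputable def nadd : Ordinal.{u} → Ordinal.{u} → Ordinal.{u}
  | a, b =>
    max (blsub.{u, u} a fun a' _ => nadd a' b) (blsub.{u, u} b fun b' _ => nadd a b')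
termination_by a b => (a, b)
decreasing_by
  all_goals first
    | exact Prod.Lex.left _ _ (by assumption)
    | exact Prod.Lex.right _ (by assumption)

end Ordinal

/-- Finite partial natural (Hessenberg) sums. -/
noncomputable def natSumPrefix (γ : ℕ → Ordinal) : ℕ → Ordinal
  | 0 => 0
  | n + 1 => Ordinal.nadd (natSumPrefix γ n) (γ n)

/-- The infinite natural sum. -/
noncomputable def inatSum (γ : ℕ → Ordinal) : Ordinal := ⨆ n : ℕ, natSumPrefix γ n


noncomputable def psize : PFml → Ordinal
  | .pos _ => 1
  | .neg _ => 1
  | .and φ ψ => Ordinal.nadd (psize φ) (psize ψ)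
  | .or φ ψ => Ordinal.nadd (psize φ) (psize ψ)
  | .iand f => inatSum fun i => psize (f i)
  | .ior f => inatSum fun i => psize (f i)

/-- Player I has a winning strategy in the propositional game `EFB^P_γ(𝔄, 𝔅)`. -/
inductive WinIP : Set (ℕ → Bool) → Set (ℕ → Bool) → Ordinal → Prop
  | lit {𝔄 𝔅 : Set (ℕ → Bool)} {γ : Ordinal} (i : ℕ) (b : Bool) :
      (∀ t ∈ 𝔄, t i = b) → (∀ t ∈ 𝔅, t i ≠ b) → WinIP 𝔄 𝔅 γ
  | splitL {𝔄 𝔅 : Set (ℕ → Bool)} {γ : Ordinal} (𝔄₁ 𝔄₂ : Set (ℕ → Bool))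
      (γ₁ γ₂ : Ordinal) : 𝔄 = 𝔄₁ ∪ 𝔄₂ → γ₁ ≠ 0 → γ₂ ≠ 0 → Ordinal.nadd γ₁ γ₂ ≤ γ →
      WinIP 𝔄₁ 𝔅 γ₁ → WinIP 𝔄₂ 𝔅 γ₂ → WinIP 𝔄 𝔅 γ
  | splitR {𝔄 𝔅 : Set (ℕ → Bool)} {γ : Ordinal} (𝔅₁ 𝔅₂ : Set (ℕ → Bool))
      (γ₁ γ₂ : Ordinal) : 𝔅 = 𝔅₁ ∪ 𝔅₂ → γ₁ ≠ 0 → γ₂ ≠ 0 → Ordinal.nadd γ₁ γ₂ ≤ γ →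
      WinIP 𝔄 𝔅₁ γ₁ → WinIP 𝔄 𝔅₂ γ₂ → WinIP 𝔄 𝔅 γ
  | isplitL {𝔄 𝔅 : Set (ℕ → Bool)} {γ : Ordinal} (𝔄s : ℕ → Set (ℕ → Bool))
      (γs : ℕ → Ordinal) : 𝔄 = ⋃ i, 𝔄s i → (∀ i, γs i ≠ 0) → inatSum γs ≤ γ →
      (∀ i, WinIP (𝔄s i) 𝔅 (γs i)) → WinIP 𝔄 𝔅 γ
  | isplitR {𝔄 𝔅 : Set (ℕ → Bool)} {γ : Ordinal} (𝔅s : ℕ → Set (ℕ → Bool))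
      (γs : ℕ → Ordinal) : 𝔅 = ⋃ i, 𝔅s i → (∀ i, γs i ≠ 0) → inatSum γs ≤ γ →
      (∀ i, WinIP 𝔄 (𝔅s i) (γs i)) → WinIP 𝔄 𝔅 γ

/-- Two strings agree on the first `n` coordinates. -/
def Agr (u v : ℕ → Bool) (n : ℕ) : Prop := ∀ i < n, u i = v i

lemma agr_refl (u : ℕ → Bool) (n : ℕ) : Agr u u n := fun _ _ => rfl

lemma agr_trans {u v w : ℕ → Bool} {n : ℕ} (h1 : Agr u v n) (h2 : Agr v w n) : Agr u w n :=
  fun i hi => (h1 i hi).trans (h2 i hi)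

lemma agr_mono {u v : ℕ → Bool} {m n : ℕ} (h : m ≤ n) (ha : Agr u v n) : Agr u v m :=
  fun i hi => ha i (lt_of_lt_of_le hi h)

/-- `X` is dense in the cylinder determined by the first `n` values of `t`. -/
def DIn (X : Set (ℕ → Bool)) (t : ℕ → Bool) (n : ℕ) : Prop :=
  ∀ u m, n ≤ m → Agr u t n → ∃ v ∈ X, Agr v u m

/-- `t` is in the closure of `X`. -/
def Lim (t : ℕ → Bool) (X : Set (ℕ → Bool)) : Prop := ∀ n, ∃ u ∈ X, Agr u t n

def Strong (A B : Set (ℕ → Bool)) : Prop := ∃ t n, DIn A t n ∧ DIn B t n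

def WkA (A B : Set (ℕ → Bool)) : Prop := ∃ t, t ∈ A ∧ Lim t B

def WkB (A B : Set (ℕ → Bool)) : Prop := ∃ t, t ∈ B ∧ Lim t A

lemma din_restrict {X : Set (ℕ → Bool)} {t t' : ℕ → Bool} {n n' : ℕ}
    (h : DIn X t n) (hn : n ≤ n') (ha : Agr t' t n) : DIn X t' n' :=
  fun u m hm hu => h u m (hn.trans hm) (agr_trans (agr_mono hn hu) ha)

lemma din_self {X : Set (ℕ → Bool)} {t : ℕ → Bool} {n : ℕ} (h : DIn X t n) :
    ∃ v ∈ X, Agr v t n := h t n le_rfl (agr_refl t n)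

lemma din_union {A B : Set (ℕ → Bool)} {t : ℕ → Bool} {n : ℕ} (h : DIn (A ∪ B) t n) :
    (∃ t' n', n ≤ n' ∧ Agr t' t n ∧ DIn A t' n') ∨
    (∃ t' n', n ≤ n' ∧ Agr t' t n ∧ DIn B t' n') := by
  by_cases hc : ∃ t' n', n ≤ n' ∧ Agr t' t n ∧ DIn A t' n'
  · exact Or.inl hc
  · right
    push_neg at hc
    have hnd : ¬ DIn A t n := hc t n le_rfl (agr_refl t n)
    unfold DIn at hnd
    push_neg at hnd
    obtain ⟨u, m, hm, hu, hA⟩ := hnd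
    refine ⟨u, m, hm, hu, fun w k hk hw => ?_⟩
    obtain ⟨v, hv, hvw⟩ := h w k (hm.trans hk) (agr_trans (agr_mono hm hw) hu)
    rcases hv with hv | hv
    · exact absurd (agr_trans (agr_mono hk hvw) hw) (hA v hv)
    · exact ⟨v, hv, hvw⟩

lemma lim_union {t : ℕ → Bool} {A B : Set (ℕ → Bool)} (h : Lim t (A ∪ B)) :
    Lim t A ∨ Lim t B := by
  by_cases hc : Lim t A
  · exact Or.inl hc
  · right
    unfold Lim at hc
    push_neg at hc
    obtain ⟨n₀, h₀⟩ := hc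
    intro n
    obtain ⟨u, hu, hagr⟩ := h (max n n₀)
    rcases hu with hu | hu
    · exact absurd (agr_mono (le_max_right _ _) hagr) (h₀ u hu)
    · exact ⟨u, hu, agr_mono (le_max_left _ _) hagr⟩

lemma lim_of_din {B : Set (ℕ → Bool)} {t t' : ℕ → Bool} {n : ℕ}
    (h : DIn B t n) (ha : Agr t' t n) : Lim t' B := by
  intro m
  obtain ⟨v, hv, hva⟩ := h t' (max n m) (le_max_left _ _) ha
  exact ⟨v, hv, agr_mono (le_max_right _ _) hva⟩

lemma avoid {A : ℕ → Set (ℕ → Bool)} {t : ℕ → Bool} {n : ℕ} (N : ℕ)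
    (h : ∀ i, ∀ t' n', n ≤ n' → Agr t' t n → ¬ DIn (A i) t' n') :
    ∃ t' n', n ≤ n' ∧ Agr t' t n ∧ ∀ i < N, ∀ v ∈ A i, ¬ Agr v t' n' := by
  induction N with
  | zero => exact ⟨t, n, le_rfl, agr_refl t n, fun i hi => absurd hi (Nat.not_lt_zero i)⟩
  | succ N ih =>
    obtain ⟨t', n', hn, ha, hav⟩ := ih
    have hnd := h N t' n' hn ha
    unfold DIn at hnd
    push_neg at hnd
    obtain ⟨u, m, hm, hu, hA⟩ := hnd
    refine ⟨u, m, hn.trans hm, agr_trans (agr_mono hn hu) ha, fun i hi v hv hva => ?_⟩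
    rcases Nat.lt_succ_iff_lt_or_eq.mp hi with hi | rfl
    · exact hav i hi v hv (agr_trans (agr_mono hm hva) hu)
    · exact hA v hv hva

/- Ordinal facts -/

lemma nadd_lt_nadd_right' {a b b' : Ordinal} (h : b' < b) :
    Ordinal.nadd a b' < Ordinal.nadd a b := by
  rw [Ordinal.nadd.eq_1 a b]
  exact lt_of_lt_of_le (Ordinal.lt_blsub (fun b' _ => Ordinal.nadd a b') b' h) (le_max_right _ _)

lemma nadd_lt_nadd_left' {a a' b : Ordinal} (h : a' < a) :
    Ordinal.nadd a' b < Ordinal.nadd a b := by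
  rw [Ordinal.nadd.eq_1 a b]
  exact lt_of_lt_of_le (Ordinal.lt_blsub (fun a' _ => Ordinal.nadd a' b) a' h) (le_max_left _ _)

lemma le_nadd_self' (a b : Ordinal) : a ≤ Ordinal.nadd a b := by
  induction a using WellFoundedLT.induction with
  | _ a ih =>
  refine le_of_forall_lt fun c hc => ?_
  exact lt_of_le_of_lt (ih c hc) (nadd_lt_nadd_left' hc)

lemma add_le_nadd' (a b : Ordinal) : a + b ≤ Ordinal.nadd a b := by
  induction b using WellFoundedLT.induction with
  | _ b ih =>
  refine le_of_forall_lt fun c hc => ?_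
  rcases lt_or_ge c a with h | h
  · exact lt_of_lt_of_le h (le_nadd_self' a b)
  · obtain ⟨d, rfl⟩ := le_iff_exists_add.mp h
    have hd : d < b := (add_lt_add_iff_left a).mp hc
    exact lt_of_le_of_lt (ih d hd) (nadd_lt_nadd_right' hd)

lemma natSumPrefix_mono (γ : ℕ → Ordinal) : Monotone (natSumPrefix γ) := by
  apply monotone_nat_of_le_succ
  intro n
  show natSumPrefix γ n ≤ Ordinal.nadd (natSumPrefix γ n) (γ n)
  calc natSumPrefix γ n ≤ natSumPrefix γ n + γ n := le_self_add
    _ ≤ _ := add_le_nadd' _ _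

lemma le_natSumPrefix_succ (γ : ℕ → Ordinal) (i : ℕ) : γ i ≤ natSumPrefix γ (i + 1) := by
  show γ i ≤ Ordinal.nadd (natSumPrefix γ i) (γ i)
  calc γ i ≤ natSumPrefix γ i + γ i := le_add_self
    _ ≤ _ := add_le_nadd' _ _

lemma natSumPrefix_le_inatSum (γ : ℕ → Ordinal) (n : ℕ) : natSumPrefix γ n ≤ inatSum γ := by
  unfold inatSum
  exact Ordinal.le_iSup (fun n => natSumPrefix γ n) n

lemma le_inatSum (γ : ℕ → Ordinal) (i : ℕ) : γ i ≤ inatSum γ :=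
  (le_natSumPrefix_succ γ i).trans (natSumPrefix_le_inatSum γ (i + 1))

lemma nat_le_natSumPrefix {γ : ℕ → Ordinal} (h : ∀ i, γ i ≠ 0) (n : ℕ) :
    (n : Ordinal) ≤ natSumPrefix γ n := by
  induction n with
  | zero => simp
  | succ n ih =>
    show ((n + 1 : ℕ) : Ordinal) ≤ Ordinal.nadd (natSumPrefix γ n) (γ n)
    have h1 : (1 : Ordinal) ≤ γ n := Ordinal.one_le_iff_ne_zero.mpr (h n)
    calc ((n + 1 : ℕ) : Ordinal) = (n : Ordinal) + 1 := by push_cast; ring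
      _ ≤ natSumPrefix γ n + γ n := add_le_add ih h1
      _ ≤ _ := add_le_nadd' _ _

lemma omega_le_inatSum {γ : ℕ → Ordinal} (h : ∀ i, γ i ≠ 0) :
    Ordinal.omega0 ≤ inatSum γ := by
  rw [Ordinal.omega0_le]
  exact fun n => (nat_le_natSumPrefix h n).trans (natSumPrefix_le_inatSum γ n)

lemma exists_fin_large {γs : ℕ → Ordinal} {g : Ordinal} (h : ∀ i, γs i ≠ 0)
    (hs : inatSum γs ≤ g) (hg : g < Ordinal.omega0 * Ordinal.omega0) :
    ∃ N, ∀ i, N ≤ i → γs i < Ordinal.omega0 := by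
  by_contra hc
  push_neg at hc
  have claim : ∀ k : ℕ, ∃ n, Ordinal.omega0 * k ≤ natSumPrefix γs n := by
    intro k
    induction k with
    | zero => exact ⟨0, by simp⟩
    | succ k ih =>
      obtain ⟨n, hn⟩ := ih
      obtain ⟨i, hni, hωi⟩ := hc n
      refine ⟨i + 1, ?_⟩
      show _ ≤ Ordinal.nadd (natSumPrefix γs i) (γs i)
      calc Ordinal.omega0 * ((k + 1 : ℕ) : Ordinal)
          = Ordinal.omega0 * (k : Ordinal) + Ordinal.omega0 := by
            push_cast; rw [mul_add, mul_one]
        _ ≤ natSumPrefix γs n + γs i := add_le_add hn hωi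
        _ ≤ natSumPrefix γs i + γs i := add_le_add_left (natSumPrefix_mono γs hni) _
        _ ≤ _ := add_le_nadd' _ _
  have : Ordinal.omega0 * Ordinal.omega0 ≤ inatSum γs := by
    rw [Ordinal.mul_le_iff_of_isSuccLimit Ordinal.isSuccLimit_omega0]
    intro b hb
    obtain ⟨k, rfl⟩ := Ordinal.lt_omega0.mp hb
    obtain ⟨n, hn⟩ := claim k
    exact hn.trans (natSumPrefix_le_inatSum γs n)
  exact absurd (this.trans hs) (not_le.mpr hg)

lemma le_of_nadd_left {a b c : Ordinal} (h : Ordinal.nadd a b ≤ c) : a ≤ c :=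
  le_trans (le_trans ((le_self_add (a := a) (b := b))) (add_le_nadd' a b)) h

lemma le_of_nadd_right {a b c : Ordinal} (h : Ordinal.nadd a b ≤ c) : b ≤ c :=
  le_trans (le_trans ((le_add_self (a := b) (b := a))) (add_le_nadd' a b)) h

/-- Player I's winning strategy from the inductive definition. -/
theorem winIP_master {A B : Set (ℕ → Bool)} {γ : Ordinal} (h : WinIP A B γ) :
    (γ < Ordinal.omega0 * Ordinal.omega0 → ¬ Strong A B) ∧
    (γ < Ordinal.omega0 → ¬ WkA A B) ∧
    (γ < Ordinal.omega0 → ¬ WkB A B) := by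
  induction h with
  | @lit A B γ i b hA hB =>
    refine ⟨fun _ hS => ?_, fun _ hW => ?_, fun _ hW => ?_⟩
    · obtain ⟨t, n, dA, dB⟩ := hS
      by_cases hi : i < n
      · obtain ⟨u, hu, hua⟩ := din_self dA
        obtain ⟨v, hv, hva⟩ := din_self dB
        exact hB v hv ((hva i hi).trans ((hua i hi).symm.trans (hA u hu)))
      · push_neg at hi
        obtain ⟨v, hv, hva⟩ := dB (fun j => if j = i then b else t j) (i + 1)
          (by omega) (fun j hj => by simp only [if_neg (by omega : j ≠ i)])
        have : v i = b := by simpa using hva i (by omega)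
        exact hB v hv this
    · obtain ⟨t, ht, hlim⟩ := hW
      obtain ⟨v, hv, hva⟩ := hlim (i + 1)
      exact hB v hv ((hva i (by omega)).trans (hA t ht))
    · obtain ⟨t, ht, hlim⟩ := hW
      obtain ⟨v, hv, hva⟩ := hlim (i + 1)
      exact hB t ht (((hva i (by omega)).symm).trans (hA v hv))
  | @splitL A B γ A₁ A₂ γ₁ γ₂ hAeq hγ₁ hγ₂ hle hw1 hw2 ih1 ih2 =>
    subst hAeq
    have h1γ : γ₁ ≤ γ := le_of_nadd_left hle
    have h2γ : γ₂ ≤ γ := le_of_nadd_right hle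
    refine ⟨fun hγ hS => ?_, fun hγ hW => ?_, fun hγ hW => ?_⟩
    · obtain ⟨t, n, dA, dB⟩ := hS
      rcases din_union dA with ⟨t', n', hn, ha, dA'⟩ | ⟨t', n', hn, ha, dA'⟩
      · exact ih1.1 (lt_of_le_of_lt h1γ hγ) ⟨t', n', dA', din_restrict dB hn ha⟩
      · exact ih2.1 (lt_of_le_of_lt h2γ hγ) ⟨t', n', dA', din_restrict dB hn ha⟩
    · obtain ⟨t, ht, hlim⟩ := hW
      rcases ht with ht | ht
      · exact ih1.2.1 (lt_of_le_of_lt h1γ hγ) ⟨t, ht, hlim⟩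
      · exact ih2.2.1 (lt_of_le_of_lt h2γ hγ) ⟨t, ht, hlim⟩
    · obtain ⟨t, ht, hlim⟩ := hW
      rcases lim_union hlim with hlim' | hlim'
      · exact ih1.2.2 (lt_of_le_of_lt h1γ hγ) ⟨t, ht, hlim'⟩
      · exact ih2.2.2 (lt_of_le_of_lt h2γ hγ) ⟨t, ht, hlim'⟩
  | @splitR A B γ B₁ B₂ γ₁ γ₂ hBeq hγ₁ hγ₂ hle hw1 hw2 ih1 ih2 =>
    subst hBeq
    have h1γ : γ₁ ≤ γ := le_of_nadd_left hle
    have h2γ : γ₂ ≤ γ := le_of_nadd_right hle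
    refine ⟨fun hγ hS => ?_, fun hγ hW => ?_, fun hγ hW => ?_⟩
    · obtain ⟨t, n, dA, dB⟩ := hS
      rcases din_union dB with ⟨t', n', hn, ha, dB'⟩ | ⟨t', n', hn, ha, dB'⟩
      · exact ih1.1 (lt_of_le_of_lt h1γ hγ) ⟨t', n', din_restrict dA hn ha, dB'⟩
      · exact ih2.1 (lt_of_le_of_lt h2γ hγ) ⟨t', n', din_restrict dA hn ha, dB'⟩
    · obtain ⟨t, ht, hlim⟩ := hW
      rcases lim_union hlim with hlim' | hlim'
      · exact ih1.2.1 (lt_of_le_of_lt h1γ hγ) ⟨t, ht, hlim'⟩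
      · exact ih2.2.1 (lt_of_le_of_lt h2γ hγ) ⟨t, ht, hlim'⟩
    · obtain ⟨t, ht, hlim⟩ := hW
      rcases ht with ht | ht
      · exact ih1.2.2 (lt_of_le_of_lt h1γ hγ) ⟨t, ht, hlim⟩
      · exact ih2.2.2 (lt_of_le_of_lt h2γ hγ) ⟨t, ht, hlim⟩
  | @isplitL A B γ As γs hAeq hne hsum hws ih =>
    subst hAeq
    have hωle : Ordinal.omega0 ≤ γ := (omega_le_inatSum hne).trans hsum
    refine ⟨fun hγ hS => ?_, fun hγ _ => absurd hγ (not_lt.mpr hωle),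
      fun hγ _ => absurd hγ (not_lt.mpr hωle)⟩
    obtain ⟨t, n, dA, dB⟩ := hS
    by_cases hc : ∃ i t' n', n ≤ n' ∧ Agr t' t n ∧ DIn (As i) t' n'
    · obtain ⟨i, t', n', hn, ha, dAi⟩ := hc
      exact (ih i).1 (lt_of_le_of_lt ((le_inatSum γs i).trans hsum) hγ)
        ⟨t', n', dAi, din_restrict dB hn ha⟩
    · push_neg at hc
      obtain ⟨N, hN⟩ := exists_fin_large hne hsum hγ
      obtain ⟨t', n', hn, ha, hav⟩ := avoid N (fun i t'' n'' h1 h2 => hc i t'' n'' h1 h2)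
      obtain ⟨v, hv, hva⟩ := din_self (din_restrict dA hn ha)
      obtain ⟨j, hvj⟩ := Set.mem_iUnion.mp hv
      have hjN : N ≤ j := by
        by_contra hj
        exact hav j (by omega) v hvj hva
      exact (ih j).2.1 (hN j hjN)
        ⟨v, hvj, lim_of_din dB (agr_trans (agr_mono hn hva) ha)⟩
  | @isplitR A B γ Bs γs hBeq hne hsum hws ih =>
    subst hBeq
    have hωle : Ordinal.omega0 ≤ γ := (omega_le_inatSum hne).trans hsum
    refine ⟨fun hγ hS => ?_, fun hγ _ => absurd hγ (not_lt.mpr hωle),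
      fun hγ _ => absurd hγ (not_lt.mpr hωle)⟩
    obtain ⟨t, n, dA, dB⟩ := hS
    by_cases hc : ∃ i t' n', n ≤ n' ∧ Agr t' t n ∧ DIn (Bs i) t' n'
    · obtain ⟨i, t', n', hn, ha, dBi⟩ := hc
      exact (ih i).1 (lt_of_le_of_lt ((le_inatSum γs i).trans hsum) hγ)
        ⟨t', n', din_restrict dA hn ha, dBi⟩
    · push_neg at hc
      obtain ⟨N, hN⟩ := exists_fin_large hne hsum hγ
      obtain ⟨t', n', hn, ha, hav⟩ := avoid N (fun i t'' n'' h1 h2 => hc i t'' n'' h1 h2)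
      obtain ⟨v, hv, hva⟩ := din_self (din_restrict dB hn ha)
      obtain ⟨j, hvj⟩ := Set.mem_iUnion.mp hv
      have hjN : N ≤ j := by
        by_contra hj
        exact hav j (by omega) v hvj hva
      exact (ih j).2.2 (hN j hjN)
        ⟨v, hvj, lim_of_din dA (agr_trans (agr_mono hn hva) ha)⟩

/-- For dense `P₁, P₂ ⊆ 2^ω`, Player II has a winning strategy in
`EFB^P_α(P₁, P₂)` for every `α < ω²`, i.e. Player I has none. -/
theorem not_winIP_of_dense (P₁ P₂ : Set (ℕ → Bool)) (h₁ : Dense P₁) (h₂ : Dense P₂)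
    (α : Ordinal) (hα : α < Ordinal.omega0 * Ordinal.omega0) : ¬ WinIP P₁ P₂ α := by
  intro hw
  have hdin : ∀ (P : Set (ℕ → Bool)), Dense P → DIn P (fun _ => false) 0 := by
    intro P hP u m _ _
    have hopen : IsOpen {v : ℕ → Bool | Agr v u m} := by
      have : {v : ℕ → Bool | Agr v u m} = ⋂ i ∈ Finset.range m, {v : ℕ → Bool | v i = u i} := by
        ext v
        simp [Agr, Set.mem_iInter]
      rw [this]
      refine isOpen_biInter_finset fun i _ => ?_
      have h2 : {v : ℕ → Bool | v i = u i} = (fun v : ℕ → Bool => v i) ⁻¹' {u i} := rfl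
      rw [h2]
      exact (continuous_apply i).isOpen_preimage _ (isOpen_discrete _)
    obtain ⟨v, hvP, hvO⟩ := hP.exists_mem_open hopen ⟨u, agr_refl u m⟩
    exact ⟨v, hvP, hvO⟩
  exact (winIP_master hw).1 hα ⟨fun _ => false, 0, hdin P₁ h₁, hdin P₂ h₂⟩
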